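/- arXiv:0708.4381 — 3 statements merged into one kernel-verified Lean document; each statement's English description precedes it below -/
import Mathlib

section
/- Let F be a finite field and suppose a subgroup H of GL(n, F) is isomorphic to the alternating group A_{4d₁} for some positive integer d₁. Then n ≥ d₁. -/
open Module Equiv Equiv.Perm

/-- If `f ^ p = 1` with `(p : K) ≠ 0`, then generalized eigenvectors are eigenvectors. -/
lemma eigen_aux {K V : Type*} [Field K] [AddCommGroup V] [Module K V]
    {p : ℕ} (hp : 0 < p) (hpK : (p : K) ≠ 0) (f : Module.End K V)
    (hf : f ^ p = 1) (μ : K) :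
    ∀ x ∈ f.maxGenEigenspace μ, f x = μ • x := by
  have hpowx : ∀ (x : V), f x = μ • x → ∀ m : ℕ, (f ^ m) x = μ ^ m • x := by
    intro x hx m
    induction m with
    | zero => simp
    | succ m ih =>
      rw [pow_succ', Module.End.mul_apply, ih, map_smul, hx, smul_smul, pow_succ, mul_comm]
  have claim1 : ∀ (x : V), x ≠ 0 → f x = μ • x → μ ^ p = 1 := by
    intro x hx hfx
    have h1 : (f ^ p) x = μ ^ p • x := hpowx x hfx p
    rw [hf] at h1
    have h2 : (μ ^ p - 1) • x = 0 := by
      rw [sub_smul, one_smul, ← h1]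
      simp [Module.End.one_apply]
    rcases smul_eq_zero.mp h2 with h | h
    · exact sub_eq_zero.mp h
    · exact absurd h hx
  set N : Module.End K V := f - μ • 1 with hN
  have hNx : ∀ x : V, N x = f x - μ • x := by
    intro x; simp [hN, LinearMap.sub_apply]
  have claim2 : ∀ x : V, N (N x) = 0 → N x = 0 := by
    intro x hNN
    by_cases hw : N x = 0
    · exact hw
    exfalso
    set w : V := N x with hwdef
    have hfw : f w = μ • w := by
      have h0 := hNx w; rw [hNN] at h0
      exact (sub_eq_zero.mp h0.symm)
    have hμp : μ ^ p = 1 := claim1 w hw hfw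
    have hμ : μ ≠ 0 := by
      intro h
      rw [h, zero_pow hp.ne'] at hμp
      exact zero_ne_one hμp
    have hfx : f x = μ • x + w := by
      have := hNx x
      rw [← hwdef] at this
      rw [eq_comm, sub_eq_iff_eq_add] at this
      rw [this, add_comm]
    -- key binomial-style computation
    have key : ∀ j : ℕ, (f ^ (j + 1)) x = μ ^ (j + 1) • x + ((j + 1 : ℕ) * μ ^ j) • w := by
      intro j
      induction j with
      | zero => simpa using hfx
      | succ j ih =>
        rw [pow_succ', Module.End.mul_apply, ih]
        rw [map_add, map_smul, map_smul, hfx, hfw]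
        rw [smul_add, smul_smul, smul_smul, add_assoc, ← add_smul]
        congr 1
        · rw [← pow_succ]
        · push_cast; ring
    obtain ⟨q, rfl⟩ : ∃ q, p = q + 1 := ⟨p - 1, (Nat.succ_pred_eq_of_pos hp).symm⟩
    have h1 := key q
    rw [hf] at h1
    have h2 : ((q + 1 : ℕ) * μ ^ q) • w = 0 := by
      have hx1 : (1 : Module.End K V) x = x := rfl
      rw [hx1] at h1
      rw [hμp, one_smul] at h1
      have := h1
      nth_rewrite 1 [← add_zero x] at this
      exact (add_left_cancel this).symm
    rcases smul_eq_zero.mp h2 with h | h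
    · rcases mul_eq_zero.mp h with h' | h'
      · exact hpK (by exact_mod_cast h')
      · exact hμ ((pow_eq_zero_iff'.mp h').1)
    · exact hw h
  have claim3 : ∀ (k : ℕ) (x : V), (N ^ k) x = 0 → N x = 0 := by
    intro k
    induction k with
    | zero =>
      intro x hx
      simp only [pow_zero, Module.End.one_apply] at hx
      rw [hx, map_zero]
    | succ k ih =>
      intro x hx
      rw [pow_succ, Module.End.mul_apply] at hx
      exact claim2 x (ih (N x) hx)
  intro x hx
  rw [Module.End.mem_maxGenEigenspace] at hx
  obtain ⟨k, hk⟩ := hx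
  have : N x = 0 := claim3 k x hk
  rw [hNx x] at this
  have := sub_eq_zero.mp this
  exact this

lemma stepA {p : ℕ} [NeZero p] {d : ℕ} (σ : Equiv.Perm (Fin 4))
    (hσp : σ ^ p = 1) (hsgn : Equiv.Perm.sign σ = 1)
    (hσ : ∀ k < p, σ ^ k = 1 → k = 0) :
    ∃ ψ : (Fin d → Multiplicative (ZMod p)) →* alternatingGroup (Fin (4 * d)),
      Function.Injective ψ := by
  classical
  have hpowmod : ∀ a b : ZMod p, σ ^ (a + b).val = σ ^ a.val * σ ^ b.val := by
    intro a b
    rw [← pow_add, ZMod.val_add, ← pow_eq_pow_mod _ hσp]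
  have hpowinj : ∀ a b : ZMod p, σ ^ a.val = σ ^ b.val → a = b := by
    intro a b hab
    have h1 : σ ^ (a - b).val * σ ^ b.val = σ ^ a.val := by
      rw [← hpowmod, sub_add_cancel]
    have h2 : σ ^ (a - b).val = 1 := by
      rw [hab] at h1
      exact mul_right_cancel (h1.trans (one_mul _).symm)
    have h3 : (a - b).val = 0 := hσ _ (ZMod.val_lt _) h2
    have h4 : a - b = 0 := (ZMod.val_eq_zero _).mp h3
    linear_combination (norm := abel) h4
  -- the base homomorphism into Perm (Fin d × Fin 4)
  let ψ₀ : (Fin d → Multiplicative (ZMod p)) →* Equiv.Perm (Fin d × Fin 4) :=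
    { toFun := fun g => Equiv.prodCongrRight (fun i => σ ^ ((Multiplicative.toAdd (g i)).val))
      map_one' := by
        ext ⟨i, a⟩ <;> simp [Equiv.prodCongrRight]
      map_mul' := by
        intro g h
        ext ⟨i, a⟩ <;>
          simp [Equiv.prodCongrRight, hpowmod (Multiplicative.toAdd (g i)) (Multiplicative.toAdd (h i))] }
  have hψ₀sgn : ∀ g, Equiv.Perm.sign (ψ₀ g) = 1 := by
    intro g
    have : ψ₀ g = Equiv.prodCongrRight (fun i => σ ^ ((Multiplicative.toAdd (g i)).val)) := rfl
    rw [this, Equiv.Perm.sign_prodCongrRight]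
    apply Finset.prod_eq_one
    intro i _
    rw [map_pow, hsgn, one_pow]
  -- transport to Fin (4 * d)
  let eqv : (Fin d × Fin 4) ≃ Fin (4 * d) :=
    finProdFinEquiv.trans (finCongr (mul_comm d 4))
  let pc : Equiv.Perm (Fin d × Fin 4) →* Equiv.Perm (Fin (4 * d)) :=
    { toFun := fun q => eqv.permCongr q
      map_one' := by ext x; simp
      map_mul' := by intro q r; ext x; simp }
  have hpcinj : Function.Injective pc := fun q r h =>
    (Equiv.permCongr eqv).injective h
  let ψ₁ : (Fin d → Multiplicative (ZMod p)) →* Equiv.Perm (Fin (4 * d)) := pc.comp ψ₀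
  have hψ₁mem : ∀ g, ψ₁ g ∈ alternatingGroup (Fin (4 * d)) := by
    intro g
    rw [Equiv.Perm.mem_alternatingGroup]
    have : ψ₁ g = eqv.permCongr (ψ₀ g) := rfl
    rw [this, Equiv.Perm.sign_permCongr, hψ₀sgn]
  refine ⟨(ψ₁.codRestrict (alternatingGroup (Fin (4 * d))) hψ₁mem), ?_⟩
  intro g g' hgg'
  have h1 : ψ₁ g = ψ₁ g' := by
    have := congrArg Subtype.val hgg'
    exact this
  have h2 : ψ₀ g = ψ₀ g' := hpcinj h1
  funext i
  have h3 : ∀ a : Fin 4, (σ ^ ((Multiplicative.toAdd (g i)).val)) a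
      = (σ ^ ((Multiplicative.toAdd (g' i)).val)) a := by
    intro a
    have := congrArg (fun q : Equiv.Perm (Fin d × Fin 4) => (q (i, a)).2) h2
    simpa [ψ₀, Equiv.prodCongrRight] using this
  have h4 : σ ^ ((Multiplicative.toAdd (g i)).val)
      = σ ^ ((Multiplicative.toAdd (g' i)).val) := Equiv.ext h3
  have h5 := hpowinj _ _ h4
  exact Multiplicative.toAdd.injective h5

lemma stepB {K : Type*} [Field K] [IsAlgClosed K] {p n d : ℕ} (hp : 1 < p)
    (hpK : (p : K) ≠ 0)
    (Φ : (Fin d → Multiplicative (ZMod p)) →* Matrix.GeneralLinearGroup (Fin n) K)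
    (hΦ : Function.Injective Φ) : d ≤ n := by
  haveI : NeZero p := ⟨by omega⟩
  classical
  -- pass to endomorphisms of V = Fin n → K
  set T : Matrix (Fin n) (Fin n) K ≃ₐ[K] Module.End K (Fin n → K) :=
    Matrix.toLinAlgEquiv' with hT
  let Ψ : (Fin d → Multiplicative (ZMod p)) →* Module.End K (Fin n → K) :=
    (T.toAlgHom.toRingHom.toMonoidHom).comp
      ((Units.coeHom (Matrix (Fin n) (Fin n) K)).comp Φ)
  have hΨinj : ∀ g g', Ψ g = Ψ g' → g = g' := by
    intro g g' hgg'
    apply hΦ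
    apply Units.ext
    exact T.injective hgg'
  let gen : Fin d → (Fin d → Multiplicative (ZMod p)) :=
    fun i => Pi.mulSingle i (Multiplicative.ofAdd (1 : ZMod p))
  let f : Fin d → Module.End K (Fin n → K) := fun i => Ψ (gen i)
  have hcomm : Pairwise fun i j => Commute (f i) (f j) := by
    intro i j _
    unfold f
    rw [Commute, SemiconjBy, ← map_mul, ← map_mul, mul_comm]
  have hgenp : ∀ i, gen i ^ p = 1 := by
    intro i
    unfold gen
    rw [← Pi.mulSingle_pow]
    convert Pi.mulSingle_one i
    rw [← ofAdd_nsmul]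
    simp
  have hfp : ∀ i, f i ^ p = 1 := by
    intro i
    unfold f
    rw [← map_pow, hgenp, map_one]
  -- the simultaneous generalized eigenspaces
  set P : (Fin d → K) → Submodule K (Fin n → K) :=
    fun χ => ⨅ i, (f i).maxGenEigenspace (χ i) with hP
  have hmapsTo : ∀ i j φ, Set.MapsTo (f i) ((f j).maxGenEigenspace φ)
      ((f j).maxGenEigenspace φ) := by
    intro i j φ
    apply Module.End.mapsTo_maxGenEigenspace_of_comm
    rcases eq_or_ne i j with rfl | hij
    · rfl
    · exact (hcomm hij.symm)
  have hTop : ⨆ χ : Fin d → K, P χ = ⊤ :=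
    Module.End.iSup_iInf_maxGenEigenspace_eq_top_of_iSup_maxGenEigenspace_eq_top_of_commute
      f hcomm (fun i => Module.End.iSup_maxGenEigenspace_eq_top (f i))
  have hInd : iSupIndep P :=
    Module.End.independent_iInf_maxGenEigenspace_of_forall_mapsTo f hmapsTo
  haveI : Fintype {χ : Fin d → K // P χ ≠ ⊥} := hInd.fintypeNeBotOfFiniteDimensional
  have hcardS : Fintype.card {χ : Fin d → K // P χ ≠ ⊥} ≤ n := by
    have := hInd.subtype_ne_bot_le_finrank
    rwa [Module.finrank_fin_fun] at this
  -- each f i acts on P χ as the scalar χ i, when P χ ≠ ⊥, and χ i is a p-th root of unity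
  have hact : ∀ (χ : Fin d → K) (i : Fin d), ∀ x ∈ P χ, f i x = χ i • x := by
    intro χ i x hx
    refine eigen_aux (by omega) hpK (f i) (hfp i) (χ i) x ?_
    exact (Submodule.mem_iInf _).mp hx i
  have hroot : ∀ (χ : Fin d → K), P χ ≠ ⊥ → ∀ i, (χ i) ^ p = 1 := by
    intro χ hχ i
    obtain ⟨x, hxP, hx0⟩ := Submodule.exists_mem_ne_zero_of_ne_bot hχ
    have h1 : ∀ m : ℕ, (f i ^ m) x = (χ i) ^ m • x := by
      intro m
      induction m with
      | zero => simp
      | succ m ih =>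
        rw [pow_succ, Module.End.mul_apply, hact χ i x hxP, map_smul, ih, smul_smul, pow_succ]
        ring_nf
    have h2 := h1 p
    rw [hfp i] at h2
    have h3 : ((χ i) ^ p - 1) • x = 0 := by
      rw [sub_smul, one_smul, ← h2]
      simp
    rcases smul_eq_zero.mp h3 with h | h
    · exact sub_eq_zero.mp h
    · exact absurd h hx0
  -- scalar by which a general element acts
  set sc : (Fin d → Multiplicative (ZMod p)) → (Fin d → K) → K :=
    fun g χ => ∏ i, (χ i) ^ ((Multiplicative.toAdd (g i)).val) with hsc
  have hdecomp : ∀ g : Fin d → Multiplicative (ZMod p),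
      g = ∏ i, gen i ^ ((Multiplicative.toAdd (g i)).val) := by
    intro g
    funext j
    rw [Finset.prod_apply]
    have : ∀ i, (gen i ^ ((Multiplicative.toAdd (g i)).val)) j
        = Pi.mulSingle (M := fun _ : Fin d => Multiplicative (ZMod p)) i (g i) j := by
      intro i
      have hms : (Multiplicative.ofAdd (1 : ZMod p)) ^ ((Multiplicative.toAdd (g i)).val)
          = g i := by
        rw [← ofAdd_nsmul]
        simp [nsmul_eq_mul, ZMod.natCast_val, ZMod.cast_id]
      rw [show gen i = Pi.mulSingle (M := fun _ : Fin d => Multiplicative (ZMod p)) i (Multiplicative.ofAdd (1 : ZMod p)) from rfl,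
        ← Pi.mulSingle_pow, hms]
    rw [Finset.prod_congr rfl (fun i _ => this i)]
    rw [Fintype.prod_pi_mulSingle]
  have hscact : ∀ (g : Fin d → Multiplicative (ZMod p)) (χ : Fin d → K),
      ∀ x ∈ P χ, Ψ g x = sc g χ • x := by
    intro g χ
    have hpowact : ∀ (i : Fin d) (m : ℕ), ∀ y ∈ P χ, ((f i) ^ m) y = (χ i) ^ m • y := by
      intro i m
      induction m with
      | zero => intro y _; simp
      | succ m ih =>
        intro y hy
        rw [pow_succ, Module.End.mul_apply, hact χ i y hy, map_smul, ih y hy, smul_smul,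
          pow_succ]
        ring_nf
    have hgen : ∀ s : Finset (Fin d), ∀ x ∈ P χ,
        Ψ (∏ i ∈ s, gen i ^ ((Multiplicative.toAdd (g i)).val)) x
          = (∏ i ∈ s, (χ i) ^ ((Multiplicative.toAdd (g i)).val)) • x := by
      intro s
      induction s using Finset.cons_induction with
      | empty => intro x _; simp
      | cons a s ha ih =>
        intro x hx
        rw [Finset.prod_cons, Finset.prod_cons, map_mul, Module.End.mul_apply, ih x hx,
          map_smul, map_pow]
        rw [hpowact a _ x hx, smul_smul, mul_comm]
    intro x hx
    conv_lhs => rw [hdecomp g]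
    rw [hsc]
    exact hgen Finset.univ x hx
  -- scalars are p-th roots of unity
  set R : Finset K := (Polynomial.nthRoots p (1 : K)).toFinset with hR
  have hRcard : R.card ≤ p :=
    le_trans (Multiset.toFinset_card_le _) (by simpa using Polynomial.card_nthRoots p (1 : K))
  have hmemR : ∀ y : K, y ^ p = 1 → y ∈ R := by
    intro y hy
    rw [hR, Multiset.mem_toFinset, Polynomial.mem_nthRoots (by omega : 0 < p)]
    exact hy
  have hscR : ∀ (g) (χ : {χ : Fin d → K // P χ ≠ ⊥}), sc g χ.1 ∈ R := by
    intro g χ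
    apply hmemR
    rw [hsc]
    simp only
    rw [← Finset.prod_pow]
    apply Finset.prod_eq_one
    intro i _
    rw [← pow_mul, mul_comm, pow_mul, hroot χ.1 χ.2 i, one_pow]
  let J : (Fin d → Multiplicative (ZMod p)) → ({χ : Fin d → K // P χ ≠ ⊥} → R) :=
    fun g χ => ⟨sc g χ.1, hscR g χ⟩
  have hJinj : Function.Injective J := by
    intro g g' hgg'
    apply hΨinj
    have hker : ∀ χ : Fin d → K, P χ ≤ LinearMap.ker (Ψ g - Ψ g') := by
      intro χ x hx
      rw [LinearMap.mem_ker, LinearMap.sub_apply, sub_eq_zero]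
      by_cases hχ : P χ = ⊥
      · rw [hχ, Submodule.mem_bot] at hx
        rw [hx, map_zero, map_zero]
      · rw [hscact g χ x hx, hscact g' χ x hx]
        have h3 := congrFun hgg' ⟨χ, hχ⟩
        rw [Subtype.ext_iff] at h3
        simp only [J] at h3
        rw [h3]
    have htop : (⊤ : Submodule K (Fin n → K)) ≤ LinearMap.ker (Ψ g - Ψ g') := by
      rw [← hTop]
      exact iSup_le hker
    apply LinearMap.ext
    intro x
    have := htop (Submodule.mem_top (x := x))
    rw [LinearMap.mem_ker, LinearMap.sub_apply, sub_eq_zero] at this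
    exact this
  have h1 : p ^ d ≤ R.card ^ Fintype.card {χ : Fin d → K // P χ ≠ ⊥} := by
    calc p ^ d = Fintype.card (Fin d → Multiplicative (ZMod p)) := by
          simp [Fintype.card_fun, ZMod.card]
    _ ≤ Fintype.card ({χ : Fin d → K // P χ ≠ ⊥} → R) := Fintype.card_le_of_injective J hJinj
    _ = R.card ^ Fintype.card {χ : Fin d → K // P χ ≠ ⊥} := by
          simp [Fintype.card_fun, Fintype.card_coe]
  have h2 : R.card ^ Fintype.card {χ : Fin d → K // P χ ≠ ⊥} ≤ p ^ n :=
    le_trans (Nat.pow_le_pow_left hRcard _) (Nat.pow_le_pow_right (by omega) hcardS)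
  exact (Nat.pow_le_pow_iff_right hp).mp (h1.trans h2)



/-- Assembling lemma: an injective map from `A_{4d}` into `GL n F` forces `d ≤ n`,
given a suitable permutation `σ` of order `p` with `p ≠ 0` in the algebraic closure. -/
lemma assemble (F : Type*) [Field F] (n d : ℕ) {p : ℕ} [NeZero p] (hp : 1 < p)
    (hpK : (p : AlgebraicClosure F) ≠ 0)
    (σ : Equiv.Perm (Fin 4)) (hσp : σ ^ p = 1) (hsgn : Equiv.Perm.sign σ = 1)
    (hσ : ∀ k < p, σ ^ k = 1 → k = 0)
    (H : Subgroup (Matrix.GeneralLinearGroup (Fin n) F))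
    (e : H ≃* alternatingGroup (Fin (4 * d))) : d ≤ n := by
  classical
  obtain ⟨ψ, hψ⟩ := stepA (d := d) σ hσp hsgn hσ
  set K := AlgebraicClosure F
  have hmapinj : Function.Injective (Matrix.GeneralLinearGroup.map (n := Fin n)
      (algebraMap F K)) := by
    apply Units.map_injective
    intro A B hAB
    ext i j
    have := congrArg (fun M => M i j) hAB
    exact (algebraMap F K).injective this
  let Φ : (Fin d → Multiplicative (ZMod p)) →* Matrix.GeneralLinearGroup (Fin n) K :=
    (Matrix.GeneralLinearGroup.map (algebraMap F K)).comp
      ((H.subtype).comp ((e.symm.toMonoidHom).comp ψ))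
  have hΦ : Function.Injective Φ := by
    apply hmapinj.comp
    apply (Subgroup.subtype_injective H).comp
    exact (e.symm.injective).comp hψ
  exact stepB hp hpK Φ hΦ

/-- If a subgroup `H` of `GL(n, F)` over a finite field `F` is isomorphic
to the alternating group `A_{4*d₁}`, `d₁ ≥ 1`, then `n ≥ d₁`. -/
theorem gl_subgroup_iso_alternating_four_mul (F : Type*) [Field F] [Fintype F]
    (n d₁ : ℕ) (hd₁ : 0 < d₁)
    (H : Subgroup (Matrix.GeneralLinearGroup (Fin n) F))
    (h : Nonempty (H ≃* alternatingGroup (Fin (4 * d₁)))) :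
    d₁ ≤ n := by
  obtain ⟨e⟩ := h
  by_cases h2 : (2 : AlgebraicClosure F) = 0
  · -- characteristic 2 : use p = 3
    have h3 : (3 : AlgebraicClosure F) ≠ 0 := by
      rw [show (3 : AlgebraicClosure F) = 2 + 1 by norm_num, h2, zero_add]
      exact one_ne_zero
    exact assemble F n d₁ (p := 3) (by norm_num) (by exact_mod_cast h3)
      (Equiv.swap (0 : Fin 4) 1 * Equiv.swap 1 2) (by decide) (by decide) (by decide) H e
  · -- use p = 2
    exact assemble F n d₁ (p := 2) (by norm_num) (by exact_mod_cast h2)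
      (Equiv.swap (0 : Fin 4) 1 * Equiv.swap 2 3) (by decide) (by decide) (by decide) H e
end

section
/- For d ≥ 7, every injective group homomorphism S_d → S_{d+1} is conjugate to the standard embedding; in particular, it sends every transposition to a transposition. -/
open Equiv Equiv.Perm

lemma fact_strict {A B : ℕ} (hA : 1 ≤ A) (hB : 1 ≤ B) :
    A.factorial * B.factorial < (A + B).factorial := by
  obtain ⟨b, rfl⟩ : ∃ b, B = b + 1 := ⟨B - 1, by omega⟩
  calc A.factorial * (b+1).factorial = (b+1) * (A.factorial * b.factorial) := by
        rw [Nat.factorial_succ]; ring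
    _ ≤ (b+1) * (A + b).factorial := by
        exact Nat.mul_le_mul_left _ (Nat.le_of_dvd (Nat.factorial_pos _)
          (Nat.factorial_mul_factorial_dvd_factorial_add A b))
    _ < (A + b + 1) * (A + b).factorial := by
        have : b + 1 < A + b + 1 := by omega
        exact Nat.mul_lt_mul_of_lt_of_le this (le_refl _) (Nat.factorial_pos _)
    _ = (A + (b+1)).factorial := by rw [← Nat.factorial_succ]; ring_nf

lemma key_ineq {d k m : ℕ} (hd : 7 ≤ d) (hk : 2 ≤ k) (h : 2 * k + m = d + 1) :
    k.factorial * m.factorial < (d - 2).factorial := by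
  have hd2 : d - 2 = 2 * k + m - 3 := by omega
  rcases eq_or_lt_of_le hk with hk2 | hk3
  · -- k = 2, m = d - 3 ≥ 4
    have hm : m = d - 3 := by omega
    have hm4 : 4 ≤ m := by omega
    rw [← hk2, hd2, ← hk2]
    have : 2 * 2 + m - 3 = m + 1 := by omega
    rw [this]
    have : (2:ℕ).factorial * m.factorial = 2 * m.factorial := by norm_num [Nat.factorial]
    rw [this, Nat.factorial_succ]
    have : 2 < m + 1 := by omega
    exact Nat.mul_lt_mul_of_lt_of_le this (le_refl _) (Nat.factorial_pos _)
  · -- k ≥ 3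
    have hk3' : 3 ≤ k := hk3
    rcases Nat.eq_zero_or_pos m with hm0 | hm1
    · -- m = 0 : k! < (d-2)!, k < d - 2
      subst hm0
      have hlt : k < d - 2 := by omega
      have := (Nat.factorial_lt (show 0 < k by omega)).2 hlt
      simpa [Nat.factorial] using this
    · -- m ≥ 1
      have h1 : m.factorial ≤ (k + m - 3).factorial :=
        Nat.factorial_le (by omega)
      have h2 : k.factorial * (k + m - 3).factorial < (k + (k + m - 3)).factorial := by
        rcases Nat.eq_zero_or_pos (k + m - 3) with hz | hpos
        · -- k = 3, m = 0 impossible since m ≥ 1... k+m-3 = 0 means k=3,m=0: contradiction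
          omega
        · exact fact_strict (by omega) hpos
      have h3 : k + (k + m - 3) = d - 2 := by omega
      calc k.factorial * m.factorial ≤ k.factorial * (k + m - 3).factorial :=
            Nat.mul_le_mul_left _ h1
        _ < (k + (k + m - 3)).factorial := h2
        _ = (d - 2).factorial := by rw [h3]

lemma exists_avoid {X : Type*} [Fintype X] [DecidableEq X] (s : Finset X)
    (h : s.card < Fintype.card X) : ∃ y, y ∉ s := by
  by_contra hc
  push_neg at hc
  have h2 := Finset.card_le_card (fun x _ => hc x : (Finset.univ : Finset X) ⊆ s)
  rw [Finset.card_univ] at h2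
  omega

lemma card_triple_le {X : Type*} [DecidableEq X] (a b c : X) :
    ({a, b, c} : Finset X).card ≤ 3 := by
  apply le_trans (Finset.card_insert_le _ _)
  have := Finset.card_insert_le b ({c} : Finset X)
  simp only [Finset.card_singleton] at this
  omega

lemma card_quad_le {X : Type*} [DecidableEq X] (a b c e : X) :
    ({a, b, c, e} : Finset X).card ≤ 4 := by
  apply le_trans (Finset.card_insert_le _ _)
  have := card_triple_le b c e
  omega

lemma conj_swap {X : Type*} [DecidableEq X] (π : Perm X) (a b : X) :
    π * Equiv.swap a b * π⁻¹ = Equiv.swap (π a) (π b) :=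
  (swap_apply_apply π a b).symm

lemma threeCycle_of_normal {X : Type*} [Fintype X] [DecidableEq X]
    (h5 : 5 ≤ Fintype.card X) {N : Subgroup (Perm X)} (hN : N.Normal)
    (hne : N ≠ ⊥) : ∃ ρ ∈ N, IsThreeCycle ρ := by
  classical
  obtain ⟨σ, hσN, hσ1⟩ : ∃ σ ∈ N, σ ≠ 1 := by
    by_contra hc
    push_neg at hc
    exact hne (Subgroup.eq_bot_iff_forall N |>.2 hc)
  obtain ⟨x, hx⟩ : ∃ x, σ x ≠ x := by
    by_contra hc
    push_neg at hc
    exact hσ1 (Equiv.ext hc)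
  obtain ⟨y, hy⟩ := exists_avoid ({x, σ x, σ⁻¹ x} : Finset X)
    (lt_of_le_of_lt (card_triple_le _ _ _) (by omega))
  simp only [Finset.mem_insert, Finset.mem_singleton, not_or] at hy
  obtain ⟨hyx, hysx, hysi⟩ := hy
  have hxy : x ≠ y := fun h => hyx h.symm
  have hsxsy : σ x ≠ σ y := fun h => hxy (σ.injective h)
  have hsxx : σ x ≠ x := hx
  have hsxy : σ x ≠ y := fun h => hysx h.symm
  have hsyx : σ y ≠ x := fun h => hysi (by rw [← h]; simp)
  set τ : Perm X := Equiv.swap x y with hτ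
  have hρ₀N : Equiv.swap (σ x) (σ y) * Equiv.swap x y ∈ N := by
    have h1 : Equiv.swap (σ x) (σ y) * Equiv.swap x y = σ * (τ * σ⁻¹ * τ⁻¹) := by
      rw [← conj_swap σ x y]
      have hinv : τ⁻¹ = τ := Equiv.swap_inv x y
      rw [hinv, hτ]
      simp only [mul_assoc]
    rw [h1]
    exact N.mul_mem hσN (hN.conj_mem σ⁻¹ (N.inv_mem hσN) τ)
  by_cases hfix : σ y = y
  · refine ⟨_, hρ₀N, ?_⟩
    rw [hfix]
    rw [Equiv.swap_comm (σ x) y, Equiv.swap_comm x y]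
    exact isThreeCycle_swap_mul_swap_same hsxy.symm hyx hsxx
  · obtain ⟨w, hw⟩ := exists_avoid ({σ x, σ y, x, y} : Finset X)
      (lt_of_le_of_lt (card_quad_le _ _ _ _) (by omega))
    simp only [Finset.mem_insert, Finset.mem_singleton, not_or] at hw
    obtain ⟨hw1, hw2, hw3, hw4⟩ := hw
    have hsyy : σ y ≠ y := hfix
    set ρ₀ : Perm X := Equiv.swap (σ x) (σ y) * Equiv.swap x y with hρ₀
    set π : Perm X := Equiv.swap y w with hπ
    have hρ₁N : π * ρ₀ * π⁻¹ ∈ N := hN.conj_mem _ hρ₀N π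
    have hρ₁ : π * ρ₀ * π⁻¹ = Equiv.swap (σ x) (σ y) * Equiv.swap x w := by
      have e1 : π * ρ₀ * π⁻¹ = (π * Equiv.swap (σ x) (σ y) * π⁻¹) * (π * Equiv.swap x y * π⁻¹) := by
        rw [hρ₀]; simp only [mul_assoc, inv_mul_cancel_left, mul_inv_cancel_left]
      rw [e1, conj_swap, conj_swap, hπ]
      congr 2
      · exact Equiv.swap_apply_of_ne_of_ne hsxy (fun h => hw1 h.symm)
      · exact Equiv.swap_apply_of_ne_of_ne (fun h => hsyy h) (fun h => hw2 h.symm)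
      · exact Equiv.swap_apply_of_ne_of_ne (fun h => hyx h.symm) (fun h => hw3 h.symm)
      · exact Equiv.swap_apply_left y w
    -- ρ₂ := (π ρ₀ π⁻¹) * ρ₀ = swap x w * swap x y : three cycle
    have hρ₂N : (π * ρ₀ * π⁻¹) * ρ₀ ∈ N := N.mul_mem hρ₁N hρ₀N
    refine ⟨_, hρ₂N, ?_⟩
    rw [hρ₁, hρ₀]
    have hdisj : (Equiv.swap x w).Disjoint (Equiv.swap (σ x) (σ y)) := by
      intro z
      by_cases hzx : z = x
      · right; subst hzx; exact Equiv.swap_apply_of_ne_of_ne (Ne.symm hsxx) (Ne.symm hsyx)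
      · by_cases hzw : z = w
        · right; subst hzw
          exact Equiv.swap_apply_of_ne_of_ne hw1 hw2
        · left; exact Equiv.swap_apply_of_ne_of_ne hzx hzw
    have hcomm := hdisj.commute
    have e2 : Equiv.swap (σ x) (σ y) * Equiv.swap x w * (Equiv.swap (σ x) (σ y) * Equiv.swap x y)
        = (Equiv.swap (σ x) (σ y) * Equiv.swap (σ x) (σ y)) * (Equiv.swap x w * Equiv.swap x y) := by
      rw [mul_assoc, mul_assoc, ← mul_assoc (Equiv.swap x w), hcomm.eq, mul_assoc]
    rw [e2, Equiv.swap_mul_self, one_mul]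
    exact isThreeCycle_swap_mul_swap_same (fun h => hw3 h.symm) hxy hw4

lemma image_swap_isSwap {d : ℕ} (hd : 7 ≤ d)
    (α : Perm (Fin d) →* Perm (Fin (d + 1))) (hα : Function.Injective α)
    {x : Perm (Fin d)} (hx : x.IsSwap) : (α x).IsSwap := by
  classical
  obtain ⟨a, b, hab, rfl⟩ := hx
  set g : Perm (Fin (d + 1)) := α (Equiv.swap a b) with hg
  have hg1 : g ≠ 1 := by
    intro h
    exact hab (Equiv.swap_eq_one_iff.1 (hα (by rw [← hg, h, map_one])))
  have hgg : g * g = 1 := by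
    rw [hg, ← map_mul, Equiv.swap_mul_self, map_one]
  have hginv : ∀ z, g (g z) = z := by
    intro z
    have := congrArg (fun p => p z) hgg
    simpa using this
  rw [← card_support_eq_two]
  by_contra hcard
  -- support card ≥ 3
  have hcard3 : 3 ≤ g.support.card := by
    rcases Nat.lt_or_ge g.support.card 2 with h | h
    · exact absurd (card_support_le_one.1 (by omega)) hg1
    · omega
  -- the subtype D of permutations fixing a, b
  set p : Fin d → Prop := fun z => z ≠ a ∧ z ≠ b with hp
  have hcardD : Fintype.card {z : Fin d // p z} = d - 2 := by
    rw [Fintype.card_subtype]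
    have : Finset.filter (fun z => p z) Finset.univ = Finset.univ \ {a, b} := by
      ext z
      simp [hp, Finset.mem_sdiff, and_comm]
    rw [this, Finset.card_sdiff_of_subset (Finset.subset_univ _), Finset.card_univ, Fintype.card_fin,
      Finset.card_insert_of_notMem (by simpa using hab), Finset.card_singleton]
  set β : Perm {z : Fin d // p z} →* Perm (Fin (d + 1)) := α.comp (ofSubtype) with hβ
  have hofsub_inj : Function.Injective (ofSubtype : Perm {z : Fin d // p z} →* Perm (Fin d)) := by
    intro w w' h
    ext z
    have hz := z.2
    have := congrArg (fun q : Perm (Fin d) => q z.1) h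
    simp only [ofSubtype_apply_of_mem _ hz] at this
    exact congrArg Fin.val (by simpa using this)
  have hβinj : Function.Injective β := by
    intro w w' h
    exact hofsub_inj (hα (by simpa [hβ] using h))
  have hβcomm : ∀ w, Commute (β w) g := by
    intro w
    have hd : (ofSubtype w).Disjoint (Equiv.swap a b) := by
      intro z
      by_cases hz : p z
      · right; exact Equiv.swap_apply_of_ne_of_ne hz.1 hz.2
      · left; exact ofSubtype_apply_of_not_mem w hz
    exact (hd.commute).map α
  have hβg : ∀ w z, β w (g z) = g (β w z) := by
    intro w z
    have := (hβcomm w).eq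
    calc β w (g z) = (β w * g) z := rfl
      _ = (g * β w) z := by rw [this]
      _ = g (β w z) := rfl
  have hβfix : ∀ w z, g z = z → g (β w z) = β w z := by
    intro w z h
    rw [← hβg, h]
  -- pairs
  set Pf : Finset (Finset (Fin (d + 1))) := g.support.image (fun z => {z, g z}) with hPf
  have hpair_card : ∀ z ∈ g.support, ({z, g z} : Finset (Fin (d+1))).card = 2 := by
    intro z hz
    rw [Finset.card_insert_of_notMem (by simpa using (mem_support.1 hz).symm),
      Finset.card_singleton]
  have hpair_eq : ∀ z z' : Fin (d+1), z' ∈ ({z, g z} : Finset (Fin (d+1))) →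
      ({z', g z'} : Finset (Fin (d+1))) = {z, g z} := by
    intro z z' hz'
    rcases Finset.mem_insert.1 hz' with h | h
    · subst h; rfl
    · rw [Finset.mem_singleton] at h
      subst h
      rw [hginv z]
      exact Finset.pair_comm (g z) z
  have hdisjoint : ∀ P ∈ Pf, ∀ Q ∈ Pf, P ≠ Q → Disjoint P Q := by
    intro P hP Q hQ hne
    obtain ⟨z, hz, rfl⟩ := Finset.mem_image.1 hP
    obtain ⟨z', hz', rfl⟩ := Finset.mem_image.1 hQ
    rw [Finset.disjoint_left]
    intro t ht ht'
    exact hne ((hpair_eq z t ht).symm.trans (hpair_eq z' t ht'))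
  have hsupp_eq : g.support = Pf.biUnion id := by
    ext z
    constructor
    · intro hz
      exact Finset.mem_biUnion.2 ⟨{z, g z}, Finset.mem_image_of_mem _ hz, by simp⟩
    · intro hz
      obtain ⟨P, hP, hzP⟩ := Finset.mem_biUnion.1 hz
      obtain ⟨z', hz', rfl⟩ := Finset.mem_image.1 hP
      simp only [id] at hzP
      rcases Finset.mem_insert.1 hzP with h | h
      · exact h ▸ hz'
      · rw [Finset.mem_singleton] at h
        exact h ▸ (apply_mem_support.2 hz')
  set k := Pf.card with hk
  have hcard2k : g.support.card = 2 * k := by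
    have hcb := Finset.card_biUnion (s := Pf) (t := id)
      (fun P hP Q hQ hne => hdisjoint P hP Q hQ hne)
    rw [hsupp_eq, hcb]
    rw [Finset.sum_congr rfl (fun P hP => ?_), Finset.sum_const, smul_eq_mul, mul_comm]
    obtain ⟨z, hz, rfl⟩ := Finset.mem_image.1 hP
    exact hpair_card z hz
  have hk2 : 2 ≤ k := by omega
  -- fixed points
  have hcardFx : Fintype.card {y : Fin (d + 1) // g y = y} = (d + 1) - 2 * k := by
    rw [Fintype.card_subtype]
    have : Finset.filter (fun y => g y = y) Finset.univ = g.supportᶜ := by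
      ext y
      simp only [Finset.mem_filter, Finset.mem_univ, true_and, Finset.mem_compl, mem_support,
        not_not]
    rw [this, Finset.card_compl, Fintype.card_fin, hcard2k]
  -- map2 : action on fixed points
  have hfixmem : ∀ (w : Perm {z : Fin d // p z}) (y : Fin (d+1)), g y = y ↔ g (β w y) = β w y := by
    intro w y
    constructor
    · intro h; exact hβfix w y h
    · intro h
      have h2 : β w (g y) = β w y := by rw [hβg, h]
      exact (β w).injective h2
  set map2 : Perm {z : Fin d // p z} →* Perm {y : Fin (d+1) // g y = y} :=
    MonoidHom.mk' (fun w => (β w).subtypePerm (fun y => (hfixmem w y).symm)) (by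
      intro w w'
      ext y
      simp [map_mul, subtypePerm_apply]; rfl) with hmap2
  -- map1 : action on pairs
  have himg : ∀ (w : Perm {z : Fin d // p z}) (P : Finset (Fin (d+1))), P ∈ Pf →
      P.image (β w) ∈ Pf := by
    intro w P hP
    obtain ⟨z, hz, rfl⟩ := Finset.mem_image.1 hP
    have h1 : ({z, g z} : Finset (Fin (d+1))).image (β w) = {β w z, g (β w z)} := by
      rw [Finset.image_insert, Finset.image_singleton, hβg]
    rw [h1]
    apply Finset.mem_image_of_mem
    rw [mem_support] at hz ⊢
    intro hcon
    have : β w (g z) = β w z := by rw [hβg, hcon]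
    exact hz ((β w).injective this)
  have himg_comp : ∀ (w w' : Perm {z : Fin d // p z}) (P : Finset (Fin (d+1))),
      (P.image (β w')).image (β w) = P.image (β (w * w')) := by
    intro w w' P
    rw [Finset.image_image, map_mul]
    rfl
  have himg_id : ∀ (P : Finset (Fin (d+1))), P.image (β 1) = P := by
    intro P
    rw [map_one]
    simp
  set map1 : Perm {z : Fin d // p z} →* Perm {P // P ∈ Pf} :=
    MonoidHom.mk' (fun w =>
      { toFun := fun P => ⟨P.1.image (β w), himg w P.1 P.2⟩
        invFun := fun P => ⟨P.1.image (β w⁻¹), himg w⁻¹ P.1 P.2⟩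
        left_inv := by
          intro P
          apply Subtype.ext
          simp only
          rw [himg_comp, inv_mul_cancel, himg_id]
        right_inv := by
          intro P
          apply Subtype.ext
          simp only
          rw [himg_comp, mul_inv_cancel, himg_id] }) (by
      intro w w'
      apply Equiv.ext
      intro P
      apply Subtype.ext
      exact (himg_comp w w' P.1).symm) with hmap1
  -- the kernel K
  set K : Subgroup (Perm {z : Fin d // p z}) := map1.ker ⊓ map2.ker with hK
  have hKnormal : K.Normal := by
    constructor
    intro n hn gg
    rw [hK, Subgroup.mem_inf] at hn ⊢
    exact ⟨map1.normal_ker.conj_mem _ hn.1 gg, map2.normal_ker.conj_mem _ hn.2 gg⟩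
  by_cases hKbot : K = ⊥
  · -- injective into product
    set ν := map1.prod map2 with hν
    have hνinj : Function.Injective ν := by
      rw [← MonoidHom.ker_eq_bot_iff, hν, MonoidHom.ker_prod]
      exact hKbot
    have hcardle := Fintype.card_le_of_injective ν hνinj
    rw [Fintype.card_perm, hcardD, Fintype.card_prod, Fintype.card_perm, Fintype.card_perm,
      Fintype.card_coe, hcardFx] at hcardle
    have hkd : 2 * k ≤ d + 1 := by
      rw [← hcard2k]
      exact le_trans (Finset.card_le_card (Finset.subset_univ _))
        (by rw [Finset.card_univ, Fintype.card_fin])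
    rw [← hk] at hcardle
    have := key_ineq (d := d) (k := k) (m := d + 1 - 2 * k) hd hk2 (by omega)
    omega
  · -- K contains a three cycle
    obtain ⟨ρ, hρK, hρ3⟩ := threeCycle_of_normal (by rw [hcardD]; omega) hKnormal hKbot
    rw [hK, Subgroup.mem_inf] at hρK
    obtain ⟨hρ1, hρ2⟩ := hρK
    set c := β ρ with hc
    have hker1 : ∀ P (hP : P ∈ Pf), P.image c = P := by
      intro P hP
      have := congrArg (fun q => (q ⟨P, hP⟩ : {P // P ∈ Pf})) hρ1
      exact congrArg Subtype.val this
    have hker2 : ∀ y, g y = y → c y = y := by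
      intro y hy
      have := congrArg (fun q => (q ⟨y, hy⟩ : {y : Fin (d+1) // g y = y})) hρ2
      exact congrArg Subtype.val this
    have hcmem : ∀ z, z ∈ g.support → c z ∈ ({z, g z} : Finset (Fin (d+1))) := by
      intro z hz
      have h1 : c z ∈ ({z, g z} : Finset (Fin (d+1))).image c :=
        Finset.mem_image_of_mem _ (by simp)
      rwa [hker1 _ (Finset.mem_image_of_mem _ hz)] at h1
    have hc2 : c * c = 1 := by
      ext z
      simp only [mul_apply, one_apply]
      by_cases hz : z ∈ g.support
      · rcases Finset.mem_insert.1 (hcmem z hz) with h | h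
        · rw [h, h]
        · rw [Finset.mem_singleton] at h
          have hgz : g z ∈ g.support := apply_mem_support.2 hz
          rcases Finset.mem_insert.1 (hcmem (g z) hgz) with h2 | h2
          · exfalso
            have heq : z = g z := c.injective (h.trans h2.symm)
            exact (mem_support.1 hz) heq.symm
          · rw [Finset.mem_singleton, hginv] at h2
            rw [h, h2]
      · rw [notMem_support] at hz
        rw [hker2 z hz, hker2 z hz]
    have hρρ : ρ * ρ = 1 := hβinj (by rw [map_mul, map_one]; exact hc2)
    have h3 : orderOf ρ = 3 := hρ3.orderOf
    have hdvd : orderOf ρ ∣ 2 := orderOf_dvd_of_pow_eq_one (by rw [pow_two]; exact hρρ)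
    rw [h3] at hdvd
    omega

lemma swap_eq_swap_iff' {Y : Type*} [DecidableEq Y] {p q u v : Y} (hpq : p ≠ q) (huv : u ≠ v)
    (h : Equiv.swap p q = Equiv.swap u v) : (p = u ∧ q = v) ∨ (p = v ∧ q = u) := by
  have hp := congrArg (fun s : Perm Y => s p) h
  simp only [Equiv.swap_apply_left] at hp
  -- hp : q = swap u v p
  by_cases h1 : p = u
  · subst h1
    rw [Equiv.swap_apply_left] at hp
    exact Or.inl ⟨rfl, hp⟩
  · by_cases h2 : p = v
    · subst h2
      rw [Equiv.swap_apply_right] at hp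
      exact Or.inr ⟨rfl, hp⟩
    · rw [Equiv.swap_apply_of_ne_of_ne h1 h2] at hp
      exact absurd hp.symm hpq

lemma noncomm_swaps {Y : Type*} [DecidableEq Y] {t t' : Perm Y}
    (h1 : t.IsSwap) (h2 : t'.IsSwap) (hnc : t * t' ≠ t' * t) :
    ∃ c x y, x ≠ c ∧ y ≠ c ∧ x ≠ y ∧ t = Equiv.swap c x ∧ t' = Equiv.swap c y := by
  obtain ⟨u, v, huv, rfl⟩ := h1
  obtain ⟨u', v', huv', rfl⟩ := h2
  have hne : Equiv.swap u v ≠ Equiv.swap u' v' := by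
    intro h; rw [h] at hnc; exact hnc rfl
  by_cases hu : u = u'
  · subst hu
    have hvv : v ≠ v' := fun h => hne (by rw [h])
    exact ⟨u, v, v', Ne.symm huv, Ne.symm huv', hvv, rfl, rfl⟩
  · by_cases hv : u = v'
    · subst hv
      have hvv : v ≠ u' := by
        intro h; subst h
        exact hne (Equiv.swap_comm _ _)
      exact ⟨u, v, u', Ne.symm huv, fun h => hu h.symm, hvv, rfl, Equiv.swap_comm u' u⟩
    · by_cases hw : v = u'
      · subst hw
        exact ⟨v, u, v', huv, Ne.symm huv', hv, Equiv.swap_comm u v, rfl⟩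
      · by_cases hx : v = v'
        · subst hx
          exact ⟨v, u, u', huv, fun h => hw h.symm, hu, Equiv.swap_comm u v, Equiv.swap_comm u' v⟩
        · -- disjoint
          exfalso
          apply hnc
          have hdisj : (Equiv.swap u v).Disjoint (Equiv.swap u' v') := by
            intro z
            by_cases hz1 : z = u
            · right; subst hz1; exact Equiv.swap_apply_of_ne_of_ne hu hv
            · by_cases hz2 : z = v
              · right; subst hz2; exact Equiv.swap_apply_of_ne_of_ne hw hx
              · left; exact Equiv.swap_apply_of_ne_of_ne hz1 hz2
          exact hdisj.commute.eq

lemma closure_star_swaps {d : ℕ} (z₀ : Fin d) :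
    Subgroup.closure {σ : Perm (Fin d) | ∃ i : Fin d, i ≠ z₀ ∧ σ = Equiv.swap z₀ i} = ⊤ := by
  rw [eq_top_iff, ← closure_isSwap, Subgroup.closure_le]
  intro σ hσ
  obtain ⟨x, y, hxy, rfl⟩ := hσ
  by_cases hx : x = z₀
  · subst hx
    exact Subgroup.subset_closure ⟨y, Ne.symm hxy, rfl⟩
  · by_cases hy : y = z₀
    · subst hy
      rw [Equiv.swap_comm]
      exact Subgroup.subset_closure ⟨x, hx, rfl⟩
    · have h1 : Equiv.swap (z₀ : Fin d) x ∈ Subgroup.closure {σ : Perm (Fin d) | ∃ i : Fin d, i ≠ z₀ ∧ σ = Equiv.swap z₀ i} :=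
        Subgroup.subset_closure ⟨x, hx, rfl⟩
      have h2 : Equiv.swap (z₀ : Fin d) y ∈ Subgroup.closure {σ : Perm (Fin d) | ∃ i : Fin d, i ≠ z₀ ∧ σ = Equiv.swap z₀ i} :=
        Subgroup.subset_closure ⟨y, hy, rfl⟩
      have key : Equiv.swap x y = Equiv.swap z₀ x * Equiv.swap z₀ y * (Equiv.swap z₀ x)⁻¹ := by
        rw [← swap_apply_apply]
        congr 1
        · exact (Equiv.swap_apply_left z₀ x).symm
        · exact (Equiv.swap_apply_of_ne_of_ne hy (Ne.symm hxy)).symm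
      rw [key]
      exact Subgroup.mul_mem _ (Subgroup.mul_mem _ h1 h2) (Subgroup.inv_mem _ h1)

lemma viaEmbedding_swap {Y Z : Type*} [DecidableEq Y] [DecidableEq Z] (ι : Y ↪ Z) (u v : Y) :
    (Equiv.swap u v).viaEmbedding ι = Equiv.swap (ι u) (ι v) := by
  ext z
  by_cases hz : ∃ w, ι w = z
  · obtain ⟨w, rfl⟩ := hz
    rw [viaEmbedding_apply]
    by_cases hw1 : w = u
    · subst hw1; rw [Equiv.swap_apply_left, Equiv.swap_apply_left]
    · by_cases hw2 : w = v
      · subst hw2; rw [Equiv.swap_apply_right, Equiv.swap_apply_right]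
      · rw [Equiv.swap_apply_of_ne_of_ne hw1 hw2,
          Equiv.swap_apply_of_ne_of_ne (fun h => hw1 (ι.injective h)) (fun h => hw2 (ι.injective h))]
  · rw [viaEmbedding_apply_of_notMem _ _ _ (by simpa using hz)]
    have h1 : z ≠ ι u := fun h => hz ⟨u, h.symm⟩
    have h2 : z ≠ ι v := fun h => hz ⟨v, h.symm⟩
    rw [Equiv.swap_apply_of_ne_of_ne h1 h2]

lemma swap_mem_aux {Y : Type*} [DecidableEq Y] {a b u v : Y} (hab : a ≠ b) (huv : u ≠ v)
    (h : Equiv.swap a b = Equiv.swap u v) : u = a ∨ u = b := by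
  rcases swap_eq_swap_iff' hab huv h with ⟨h1, h2⟩ | ⟨h1, h2⟩
  · exact Or.inl h1.symm
  · exact Or.inr h2.symm

lemma tri_lemma {Y : Type*} [DecidableEq Y] {c x1 x2 : Y}
    (h1c : x1 ≠ c) (h2c : x2 ≠ c) (h12 : x1 ≠ x2) {s : Perm Y} (hs : s.IsSwap)
    (hn1 : s * Equiv.swap c x1 ≠ Equiv.swap c x1 * s)
    (hn2 : s * Equiv.swap c x2 ≠ Equiv.swap c x2 * s)
    (hn3 : s * Equiv.swap x1 x2 ≠ Equiv.swap x1 x2 * s) : False := by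
  have hsw1 : (Equiv.swap c x1).IsSwap := ⟨c, x1, Ne.symm h1c, rfl⟩
  have hsw2 : (Equiv.swap c x2).IsSwap := ⟨c, x2, Ne.symm h2c, rfl⟩
  have hsw3 : (Equiv.swap x1 x2).IsSwap := ⟨x1, x2, h12, rfl⟩
  obtain ⟨e1, f1, w1, hf1, hw1, hfw1, hs1, ht1⟩ := noncomm_swaps hs hsw1 hn1
  obtain ⟨e2, f2, w2, hf2, hw2, hfw2, hs2, ht2⟩ := noncomm_swaps hs hsw2 hn2
  obtain ⟨e3, f3, w3, hf3, hw3, hfw3, hs3, ht3⟩ := noncomm_swaps hs hsw3 hn3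
  -- ht1 : swap c x1 = swap e1 w1 so e1 ∈ {c, x1}
  have he1 : e1 = c ∨ e1 = x1 := swap_mem_aux (Ne.symm h1c) (Ne.symm hw1) ht1
  have he2 : e2 = c ∨ e2 = x2 := swap_mem_aux (Ne.symm h2c) (Ne.symm hw2) ht2
  have he3 : e3 = x1 ∨ e3 = x2 := swap_mem_aux h12 (Ne.symm hw3) ht3
  -- s = swap e1 f1 = swap e2 f2 = swap e3 f3
  have h12' : (e2 = e1 ∧ f2 = f1) ∨ (e2 = f1 ∧ f2 = e1) :=
    swap_eq_swap_iff' (Ne.symm hf2) (Ne.symm hf1) (hs2.symm.trans hs1)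
  have h13' : (e3 = e1 ∧ f3 = f1) ∨ (e3 = f1 ∧ f3 = e1) :=
    swap_eq_swap_iff' (Ne.symm hf3) (Ne.symm hf1) (hs3.symm.trans hs1)
  -- derive: s equals one of the three swaps
  rcases he1 with he1 | he1
  · -- e1 = c ; then e3 ∈ {e1, f1}, e3 ≠ c so f1 = e3 ∈ {x1, x2}
    have hf1mem : f1 = x1 ∨ f1 = x2 := by
      rcases h13' with ⟨h, _⟩ | ⟨h, _⟩
      · -- e3 = e1 = c contradicts he3 (x1 ≠ c, x2 ≠ c)
        exfalso
        rcases he3 with h3 | h3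
        · exact h1c (h3.symm.trans (h.trans he1))
        · exact h2c (h3.symm.trans (h.trans he1))
      · rcases he3 with h3 | h3
        · exact Or.inl (h.symm.trans h3)
        · exact Or.inr (h.symm.trans h3)
    rcases hf1mem with hf1m | hf1m
    · exact hn1 (by rw [hs1, he1, hf1m])
    · have hseq : s = Equiv.swap c x2 := by
        rcases h12' with ⟨h, h'⟩ | ⟨h, h'⟩
        · rw [hs2, h, h', he1, hf1m]
        · rw [hs2, h, h', he1, hf1m, Equiv.swap_comm]
      exact hn2 (by rw [hseq])
  · -- e1 = x1 ; e2 ∈ {e1, f1}, e2 ≠ x1(= e1) since e2 ∈ {c, x2} ⇒ f1 = e2 ∈ {c, x2}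
    have hf1mem : f1 = c ∨ f1 = x2 := by
      rcases h12' with ⟨h, _⟩ | ⟨h, _⟩
      · exfalso
        rcases he2 with h2 | h2
        · exact h1c (he1.symm.trans (h.symm.trans h2))
        · exact h12 (he1.symm.trans (h.symm.trans h2))
      · rcases he2 with h2 | h2
        · exact Or.inl (h.symm.trans h2)
        · exact Or.inr (h.symm.trans h2)
    rcases hf1mem with hf1m | hf1m
    · exact hn1 (by rw [hs1, he1, hf1m, Equiv.swap_comm])
    · exact hn3 (by rw [hs1, he1, hf1m])

set_option maxHeartbeats 2000000 in
/-- For `d ≥ 7`, every injective homomorphism `S_d → S_{d+1}` is conjugate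
to the standard embedding (extension of permutations by fixing the extra letter); in
particular it sends every transposition to a transposition. -/
theorem symm_embedding_conj_standard (d : ℕ) (hd : 7 ≤ d)
    (α : Equiv.Perm (Fin d) →* Equiv.Perm (Fin (d + 1)))
    (hα : Function.Injective α) :
    (∃ g : Equiv.Perm (Fin (d + 1)),
      ∀ x : Equiv.Perm (Fin d),
        α x = g * x.viaEmbedding (Fin.castLEEmb (by omega : d ≤ d + 1)) * g⁻¹) ∧
    (∀ x : Equiv.Perm (Fin d), x.IsSwap → (α x).IsSwap) := by
  classical
  have hswap : ∀ x : Perm (Fin d), x.IsSwap → (α x).IsSwap :=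
    fun x hx => image_swap_isSwap hd α hα hx
  refine ⟨?_, hswap⟩
  set i0 : Fin d := ⟨0, by omega⟩ with hi0
  set i1 : Fin d := ⟨1, by omega⟩ with hi1
  set i2 : Fin d := ⟨2, by omega⟩ with hi2
  set t : Fin d → Perm (Fin (d + 1)) := fun i => α (Equiv.swap i0 i) with ht
  have hts : ∀ i, i ≠ i0 → (t i).IsSwap := fun i hi =>
    hswap _ ⟨i0, i, Ne.symm hi, rfl⟩
  have hnc : ∀ i j, i ≠ i0 → j ≠ i0 → i ≠ j → t i * t j ≠ t j * t i := by
    intro i j hi hj hij hcon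
    rw [ht] at hcon
    simp only [← map_mul] at hcon
    have heq := hα hcon
    have := congrArg (fun s : Perm (Fin d) => s j) heq
    simp only [mul_apply] at this
    rw [Equiv.swap_apply_of_ne_of_ne hj (Ne.symm hij), Equiv.swap_apply_right] at this
    exact hi this
  have h10 : i1 ≠ i0 := by simp [hi0, hi1, Fin.ext_iff]
  have h20 : i2 ≠ i0 := by simp [hi0, hi2, Fin.ext_iff]
  have h12' : i1 ≠ i2 := by simp [hi1, hi2, Fin.ext_iff]
  obtain ⟨c, x1, x2, hx1c, hx2c, hx12, hti1, hti2⟩ :=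
    noncomm_swaps (hts i1 h10) (hts i2 h20) (hnc i1 i2 h10 h20 h12')
  -- every t i (i ≠ i0) is a swap at c
  have hcommon : ∀ i : Fin d, ∃ w, i ≠ i0 → (w ≠ c ∧ t i = Equiv.swap c w) := by
    intro i
    by_cases hi : i = i0
    · exact ⟨c, fun h => absurd hi h⟩
    · by_cases hii1 : i = i1
      · exact ⟨x1, fun _ => ⟨hx1c, hii1 ▸ hti1⟩⟩
      · by_cases hii2 : i = i2
        · exact ⟨x2, fun _ => ⟨hx2c, hii2 ▸ hti2⟩⟩
        · -- general case
          obtain ⟨e, f, w, hfe, hwe, hfw, hs1, hs2⟩ :=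
            noncomm_swaps (hts i1 h10) (hts i hi) (hnc i1 i h10 hi (fun h => hii1 h.symm))
          -- hs1 : t i1 = swap e f, so swap c x1 = swap e f
          have hef : (c = e ∧ x1 = f) ∨ (c = f ∧ x1 = e) :=
            swap_eq_swap_iff' (Ne.symm hx1c) (Ne.symm hfe) (hti1.symm.trans hs1)
          rcases hef with ⟨hce, _⟩ | ⟨hcf, hx1e⟩
          · -- c = e : t i = swap e w = swap c w
            exact ⟨w, fun _ => ⟨fun h => hwe (h.trans hce), by rw [hs2, hce]⟩⟩
          · -- c = f, x1 = e : t i = swap x1 w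
            obtain ⟨e', f', w', hfe', hwe', hfw', hs1', hs2'⟩ :=
              noncomm_swaps (hts i2 h20) (hts i hi) (hnc i2 i h20 hi (fun h => hii2 h.symm))
            have hef' : (c = e' ∧ x2 = f') ∨ (c = f' ∧ x2 = e') :=
              swap_eq_swap_iff' (Ne.symm hx2c) (Ne.symm hfe') (hti2.symm.trans hs1')
            rcases hef' with ⟨hce', _⟩ | ⟨hcf', hx2e'⟩
            · exact ⟨w', fun _ => ⟨fun h => hwe' (h.trans hce'), by rw [hs2', hce']⟩⟩
            · -- t i = swap x1 w = swap x2 w' : deduce t i = swap x1 x2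
              exfalso
              have hti_eq : t i = Equiv.swap x1 x2 := by
                have hA : t i = Equiv.swap x1 w := by rw [hs2, ← hx1e]
                have hB : t i = Equiv.swap x2 w' := by rw [hs2', ← hx2e']
                have hx1w : x1 ≠ w := fun h => hwe (h ▸ hx1e)
                have hx2w' : x2 ≠ w' := fun h => hwe' (h ▸ hx2e')
                have h12'' := swap_eq_swap_iff' hx1w hx2w' (hA.symm.trans hB)
                rcases h12'' with ⟨h1, _⟩ | ⟨_, h2⟩
                · exact absurd h1 hx12
                · rw [hA, h2]
              -- pick a fourth index
              obtain ⟨j, hj⟩ := exists_avoid ({i0, i1, i2, i} : Finset (Fin d))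
                (lt_of_le_of_lt (card_quad_le _ _ _ _) (by rw [Fintype.card_fin]; omega))
              simp only [Finset.mem_insert, Finset.mem_singleton, not_or] at hj
              obtain ⟨hj0, hj1, hj2, hji⟩ := hj
              apply tri_lemma hx1c hx2c hx12 (hts j hj0)
              · rw [← hti1]; exact fun h => (hnc j i1 hj0 h10 hj1) h
              · rw [← hti2]; exact fun h => (hnc j i2 hj0 h20 hj2) h
              · rw [← hti_eq]; exact fun h => (hnc j i hj0 hi hji) h
  choose bf hbf using hcommon
  -- build the conjugator
  set e : Fin d → Fin (d + 1) := fun i => if i = i0 then c else bf i with he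
  have heinj : Function.Injective e := by
    intro i j hij
    simp only [he] at hij
    by_cases hi : i = i0 <;> by_cases hj : j = i0
    · rw [hi, hj]
    · exfalso; rw [if_pos hi, if_neg hj] at hij; exact (hbf j hj).1 hij.symm
    · exfalso; rw [if_neg hi, if_pos hj] at hij; exact (hbf i hi).1 hij
    · rw [if_neg hi, if_neg hj] at hij
      -- bf i = bf j ⇒ t i = t j ⇒ swap i0 i = swap i0 j ⇒ i = j
      have hteq : t i = t j := by rw [(hbf i hi).2, (hbf j hj).2, hij]
      have := hα (ht ▸ hteq)
      have happ := congrArg (fun s : Perm (Fin d) => s i0) this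
      simpa [Equiv.swap_apply_left] using happ
  -- the missing point
  obtain ⟨z, hz⟩ := exists_avoid (Finset.univ.image e)
    (lt_of_le_of_lt (Finset.card_image_le.trans (by rw [Finset.card_univ, Fintype.card_fin]))
      (by rw [Fintype.card_fin]; omega))
  set f : Fin (d + 1) → Fin (d + 1) := fun y =>
    if h : (y : ℕ) < d then e ⟨(y : ℕ), h⟩ else z with hf
  have hfinj : Function.Injective f := by
    intro y y' hyy
    simp only [hf] at hyy
    by_cases hy : (y : ℕ) < d <;> by_cases hy' : (y' : ℕ) < d
    · rw [dif_pos hy, dif_pos hy'] at hyy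
      have := heinj hyy
      rw [Fin.mk.injEq] at this
      exact Fin.ext this
    · exfalso; rw [dif_pos hy, dif_neg hy'] at hyy
      exact hz (hyy ▸ Finset.mem_image_of_mem e (Finset.mem_univ _))
    · exfalso; rw [dif_neg hy, dif_pos hy'] at hyy
      exact hz (hyy.symm ▸ Finset.mem_image_of_mem e (Finset.mem_univ _))
    · rw [dif_neg hy, dif_neg hy'] at hyy
      have h1 : (y : ℕ) = d := by omega
      have h2 : (y' : ℕ) = d := by omega
      exact Fin.ext (h1.trans h2.symm)
  set G : Perm (Fin (d + 1)) := Equiv.ofBijective f (Finite.injective_iff_bijective.1 hfinj)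
    with hG
  refine ⟨G, ?_⟩
  -- two homomorphisms agree
  set ι : Fin d ↪ Fin (d + 1) := Fin.castLEEmb (by omega : d ≤ d + 1) with hι
  set φ : Perm (Fin d) →* Perm (Fin (d + 1)) :=
    ((MulAut.conj G).toMonoidHom).comp (viaEmbeddingHom ι) with hφ
  have hGι : ∀ i : Fin d, G (ι i) = e i := by
    intro i
    have hlt : ((ι i : Fin (d+1)) : ℕ) < d := by
      simp [hι, Fin.castLEEmb]
    show f (ι i) = e i
    rw [hf]
    simp only
    rw [dif_pos hlt]
    congr 1

  have hgen : ∀ i : Fin d, i ≠ i0 → α (Equiv.swap i0 i) = φ (Equiv.swap i0 i) := by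
    intro i hi
    have h1 : φ (Equiv.swap i0 i) = G * (Equiv.swap i0 i).viaEmbedding ι * G⁻¹ := by
      rw [hφ]
      simp only [MonoidHom.comp_apply, MulEquiv.toMonoidHom_eq_coe, MonoidHom.coe_coe,
        MulAut.conj_apply, viaEmbeddingHom_apply]
    rw [h1, viaEmbedding_swap, conj_swap, hGι, hGι]
    have he0 : e i0 = c := if_pos rfl
    have hei : e i = bf i := if_neg hi
    rw [he0, hei]
    exact (hbf i hi).2
  -- conclude by generation
  have htop : ∀ x : Perm (Fin d), α x = φ x := by
    have hle : Subgroup.closure {σ : Perm (Fin d) | ∃ i : Fin d, i ≠ i0 ∧ σ = Equiv.swap i0 i}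
        ≤ α.eqLocus φ := by
      rw [Subgroup.closure_le]
      rintro σ ⟨i, hi, rfl⟩
      exact hgen i hi
    rw [closure_star_swaps i0] at hle
    intro x
    exact hle (Subgroup.mem_top x)
  intro x
  rw [htop x, hφ]
  simp only [MonoidHom.comp_apply, MulEquiv.toMonoidHom_eq_coe, MonoidHom.coe_coe,
    MulAut.conj_apply, viaEmbeddingHom_apply]
end

section
/- The group F₃ with presentation ⟨x₁, x₂, y | x₁² = x₂² = (x₁x₂)^r = y³ = [y, x₁x₂] = [y, x₂x₁] = 1, x₁⁻¹yx₁ = y⁻¹, x₂⁻¹yx₂ = y⁻¹⟩, where r ≥ 3 is odd and not divisible by 3, is isomorphic to the dihedral group D_{3r}; moreover its subgroup generated by y and z = x₁x₂ is a normal subgroup isomorphic to Z/3Z × Z/rZ, and F₃ has trivial center. -/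
open scoped commutatorElement

/-- The relations of the group
`F₃ = ⟨x₁, x₂, y | x₁² = x₂² = (x₁x₂)^r = y³ = [y,x₁x₂] = [y,x₂x₁] = 1,
x₁⁻¹yx₁ = y⁻¹, x₂⁻¹yx₂ = y⁻¹⟩`, where the three generators of the free group are
`x₁ = of 0`, `x₂ = of 1`, `y = of 2`. -/
def F3rels (r : ℕ) : Set (FreeGroup (Fin 3)) :=
  { FreeGroup.of (0 : Fin 3) ^ 2, FreeGroup.of (1 : Fin 3) ^ 2,
    (FreeGroup.of (0 : Fin 3) * FreeGroup.of (1 : Fin 3)) ^ r, FreeGroup.of (2 : Fin 3) ^ 3,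
    ⁅FreeGroup.of (2 : Fin 3), FreeGroup.of (0 : Fin 3) * FreeGroup.of (1 : Fin 3)⁆,
    ⁅FreeGroup.of (2 : Fin 3), FreeGroup.of (1 : Fin 3) * FreeGroup.of (0 : Fin 3)⁆,
    (FreeGroup.of (0 : Fin 3))⁻¹ * FreeGroup.of (2 : Fin 3) * FreeGroup.of (0 : Fin 3) * FreeGroup.of (2 : Fin 3),
    (FreeGroup.of (1 : Fin 3))⁻¹ * FreeGroup.of (2 : Fin 3) * FreeGroup.of (1 : Fin 3) * FreeGroup.of (2 : Fin 3) }

namespace F3aux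

lemma inv_r {n : ℕ} (i : ZMod n) : (DihedralGroup.r i)⁻¹ = DihedralGroup.r (-i) := rfl
lemma inv_sr {n : ℕ} (i : ZMod n) : (DihedralGroup.sr i)⁻¹ = DihedralGroup.sr i := rfl

lemma r_one_zpow {n : ℕ} (m : ℤ) :
    (DihedralGroup.r 1 : DihedralGroup n) ^ m = DihedralGroup.r (m : ZMod n) := by
  obtain ⟨k⟩ | k := m
  · rw [Int.ofNat_eq_coe, zpow_natCast, DihedralGroup.r_one_pow]; norm_cast
  · rw [zpow_negSucc, DihedralGroup.r_one_pow, inv_r]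
    congr 1
    push_cast [Int.negSucc_eq]
    ring

def Fmap (r : ℕ) : Fin 3 → DihedralGroup (3 * r) :=
  ![.sr 0, .sr 3, .r (r : ZMod (3 * r))]

@[simp] lemma Fmap_zero (r : ℕ) : Fmap r 0 = .sr 0 := rfl
@[simp] lemma Fmap_one (r : ℕ) : Fmap r 1 = .sr 3 := rfl
@[simp] lemma Fmap_two (r : ℕ) : Fmap r 2 = .r (r : ZMod (3 * r)) := rfl

lemma hrels (r : ℕ) : ∀ w ∈ F3rels r, FreeGroup.lift (Fmap r) w = 1 := by
  intro w hw
  have h3r : ((3 * r : ℕ) : ZMod (3 * r)) = 0 := ZMod.natCast_self _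
  simp only [F3rels, Set.mem_insert_iff, Set.mem_singleton_iff] at hw
  rcases hw with rfl | rfl | rfl | rfl | rfl | rfl | rfl | rfl <;>
    simp only [map_pow, map_mul, map_inv, commutatorElement_def, FreeGroup.lift_apply_of,
      Fmap_zero, Fmap_one, Fmap_two]
  · rw [sq, DihedralGroup.sr_mul_sr]; simp [DihedralGroup.one_def, -DihedralGroup.r_zero]
  · rw [sq, DihedralGroup.sr_mul_sr]; simp [DihedralGroup.one_def, -DihedralGroup.r_zero]
  · rw [DihedralGroup.sr_mul_sr]
    have h3' : ((3 : ZMod (3*r)) - 0) = ((3:ℕ) : ZMod (3*r)) := by push_cast; ring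
    rw [h3', ← DihedralGroup.r_one_pow, ← pow_mul, DihedralGroup.r_one_pow, h3r,
      DihedralGroup.one_def]
  · rw [show (DihedralGroup.r (r : ZMod (3*r))) = DihedralGroup.r 1 ^ r from
      (DihedralGroup.r_one_pow r).symm, ← pow_mul, DihedralGroup.r_one_pow,
      show ((r*3:ℕ):ZMod (3*r)) = 0 from by push_cast; push_cast at h3r; linear_combination h3r, DihedralGroup.one_def]
  · simp only [mul_inv_rev, inv_r, inv_sr, DihedralGroup.r_mul_r, DihedralGroup.r_mul_sr,
      DihedralGroup.sr_mul_r, DihedralGroup.sr_mul_sr, DihedralGroup.one_def]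
    congr 1; ring
  · simp only [mul_inv_rev, inv_r, inv_sr, DihedralGroup.r_mul_r, DihedralGroup.r_mul_sr,
      DihedralGroup.sr_mul_r, DihedralGroup.sr_mul_sr, DihedralGroup.one_def]
    congr 1; ring
  · simp only [mul_inv_rev, inv_r, inv_sr, DihedralGroup.r_mul_r, DihedralGroup.r_mul_sr,
      DihedralGroup.sr_mul_r, DihedralGroup.sr_mul_sr, DihedralGroup.one_def]
    congr 1; ring
  · simp only [mul_inv_rev, inv_r, inv_sr, DihedralGroup.r_mul_r, DihedralGroup.r_mul_sr,
      DihedralGroup.sr_mul_r, DihedralGroup.sr_mul_sr, DihedralGroup.one_def]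
    congr 1; ring


lemma mk_rel (r : ℕ) (w : FreeGroup (Fin 3)) (hw : w ∈ F3rels r) :
    (QuotientGroup.mk' (Subgroup.normalClosure (F3rels r)) w : PresentedGroup (F3rels r)) = 1 :=
  (QuotientGroup.eq_one_iff w).mpr (Subgroup.subset_normalClosure hw)

@[simp] lemma mk'_of (r : ℕ) (i : Fin 3) :
    (QuotientGroup.mk' (Subgroup.normalClosure (F3rels r)) (FreeGroup.of i)) =
      PresentedGroup.of i := rfl

end F3aux

section main

variable {r : ℕ}

lemma hx1sq : (PresentedGroup.of (0 : Fin 3) : PresentedGroup (F3rels r)) ^ 2 = 1 := by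
  have h := F3aux.mk_rel r (FreeGroup.of (0 : Fin 3) ^ 2) (by simp [F3rels])
  simp only [map_pow, F3aux.mk'_of] at h; exact h

lemma hx2sq : (PresentedGroup.of (1 : Fin 3) : PresentedGroup (F3rels r)) ^ 2 = 1 := by
  have h := F3aux.mk_rel r (FreeGroup.of (1 : Fin 3) ^ 2) (by simp [F3rels])
  simp only [map_pow, F3aux.mk'_of] at h; exact h

lemma hzr : ((PresentedGroup.of (0 : Fin 3) : PresentedGroup (F3rels r)) * PresentedGroup.of (1 : Fin 3)) ^ r = 1 := by
  have h := F3aux.mk_rel r ((FreeGroup.of (0 : Fin 3) * FreeGroup.of (1 : Fin 3)) ^ r)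
    (by simp [F3rels])
  simp only [map_pow, map_mul, F3aux.mk'_of] at h; exact h

lemma hy3 : (PresentedGroup.of (2 : Fin 3) : PresentedGroup (F3rels r)) ^ 3 = 1 := by
  have h := F3aux.mk_rel r (FreeGroup.of (2 : Fin 3) ^ 3) (by simp [F3rels])
  simp only [map_pow, F3aux.mk'_of] at h; exact h

lemma hcyz : ⁅(PresentedGroup.of (2 : Fin 3) : PresentedGroup (F3rels r)),
    (PresentedGroup.of (0 : Fin 3) * PresentedGroup.of (1 : Fin 3) :
      PresentedGroup (F3rels r))⁆ = 1 := by
  have h := F3aux.mk_rel r ⁅FreeGroup.of (2 : Fin 3),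
    FreeGroup.of (0 : Fin 3) * FreeGroup.of (1 : Fin 3)⁆ (by simp [F3rels])
  simp only [map_commutatorElement, map_mul, F3aux.mk'_of] at h; exact h

lemma hc1 : (PresentedGroup.of (0 : Fin 3) : PresentedGroup (F3rels r))⁻¹ * PresentedGroup.of (2 : Fin 3) *
    PresentedGroup.of (0 : Fin 3) * PresentedGroup.of (2 : Fin 3) = 1 := by
  have h := F3aux.mk_rel r ((FreeGroup.of (0 : Fin 3))⁻¹ * FreeGroup.of (2 : Fin 3) *
    FreeGroup.of (0 : Fin 3) * FreeGroup.of (2 : Fin 3)) (by simp [F3rels])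
  simp only [map_mul, map_inv, F3aux.mk'_of] at h; exact h


/-- for `r ≥ 3` odd and not divisible by `3`, the presented group `F₃` is
isomorphic to the dihedral group `D_{3r}`; its subgroup generated by `y` and
`z = x₁x₂` is normal and isomorphic to `ℤ/3 × ℤ/r`, and `F₃` has trivial center. -/
theorem F3_iso_dihedral (r : ℕ) (hr : 3 ≤ r) (hodd : Odd r) (h3 : ¬ (3 ∣ r)) :
    Nonempty (PresentedGroup (F3rels r) ≃* DihedralGroup (3 * r)) ∧
    (Subgroup.closure
        ({PresentedGroup.of 2, PresentedGroup.of 0 * PresentedGroup.of 1} :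
          Set (PresentedGroup (F3rels r)))).Normal ∧
    Nonempty ((Subgroup.closure
        ({PresentedGroup.of 2, PresentedGroup.of 0 * PresentedGroup.of 1} :
          Set (PresentedGroup (F3rels r)))) ≃*
        Multiplicative (ZMod 3) × Multiplicative (ZMod r)) ∧
    Subgroup.center (PresentedGroup (F3rels r)) = ⊥ := by
  haveI : NeZero (3 * r) := ⟨by omega⟩
  -- Bezout coefficients
  have hcop : Nat.Coprime 3 r := (Nat.prime_three.coprime_iff_not_dvd).mpr h3
  have hco : IsCoprime (r : ℤ) 3 := by
    have := Nat.isCoprime_iff_coprime.mpr hcop.symm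
    exact_mod_cast this
  obtain ⟨a, b, hab⟩ := hco
  -- basic consequences of the relations
  have hx1x1 : (PresentedGroup.of (0 : Fin 3) : PresentedGroup (F3rels r)) *
      PresentedGroup.of (0 : Fin 3) = 1 := by rw [← sq]; exact hx1sq
  have hx2x2 : (PresentedGroup.of (1 : Fin 3) : PresentedGroup (F3rels r)) *
      PresentedGroup.of (1 : Fin 3) = 1 := by rw [← sq]; exact hx2sq
  have hx1inv : (PresentedGroup.of (0 : Fin 3) : PresentedGroup (F3rels r))⁻¹ =
      PresentedGroup.of (0 : Fin 3) := inv_eq_of_mul_eq_one_right hx1x1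
  have hx2inv : (PresentedGroup.of (1 : Fin 3) : PresentedGroup (F3rels r))⁻¹ =
      PresentedGroup.of (1 : Fin 3) := inv_eq_of_mul_eq_one_right hx2x2
  have hcomm : Commute (PresentedGroup.of (2 : Fin 3) : PresentedGroup (F3rels r))
      (PresentedGroup.of (0 : Fin 3) * PresentedGroup.of (1 : Fin 3)) :=
    commutatorElement_eq_one_iff_commute.mp hcyz
  have hconjy : PresentedGroup.of (0 : Fin 3) *
      (PresentedGroup.of (2 : Fin 3) : PresentedGroup (F3rels r)) *
      (PresentedGroup.of (0 : Fin 3))⁻¹ = (PresentedGroup.of (2 : Fin 3))⁻¹ := by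
    rw [hx1inv]
    have h := hc1 (r := r)
    have := mul_eq_one_iff_eq_inv.mp h
    rw [← this, hx1inv]
  have hconjz : PresentedGroup.of (0 : Fin 3) *
      ((PresentedGroup.of (0 : Fin 3) : PresentedGroup (F3rels r)) *
        PresentedGroup.of (1 : Fin 3)) * (PresentedGroup.of (0 : Fin 3))⁻¹ =
      ((PresentedGroup.of (0 : Fin 3) : PresentedGroup (F3rels r)) *
        PresentedGroup.of (1 : Fin 3))⁻¹ := by
    rw [mul_inv_rev, hx1inv, hx2inv]
    calc PresentedGroup.of (0 : Fin 3) *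
        (PresentedGroup.of (0 : Fin 3) * PresentedGroup.of (1 : Fin 3)) *
          PresentedGroup.of (0 : Fin 3)
        = (PresentedGroup.of (0 : Fin 3) * PresentedGroup.of (0 : Fin 3)) *
            (PresentedGroup.of (1 : Fin 3) * PresentedGroup.of (0 : Fin 3)) := by group
      _ = PresentedGroup.of (1 : Fin 3) * PresentedGroup.of (0 : Fin 3) := by
            rw [hx1x1, one_mul]

  -- the element w = y^a z^b
  set X : PresentedGroup (F3rels r) := PresentedGroup.of (0 : Fin 3) with hX
  set y : PresentedGroup (F3rels r) := PresentedGroup.of (2 : Fin 3) with hy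
  set z : PresentedGroup (F3rels r) := X * PresentedGroup.of (1 : Fin 3) with hz
  set w : PresentedGroup (F3rels r) := y ^ a * z ^ b with hw
  have hy3z : y ^ (3 : ℤ) = 1 := by rw [show (3:ℤ) = ((3:ℕ):ℤ) by norm_num, zpow_natCast]; exact hy3
  have hzrz : z ^ (r : ℤ) = 1 := by rw [zpow_natCast]; exact hzr
  have hwpow : ∀ m : ℤ, w ^ m = y ^ (a * m) * z ^ (b * m) := by
    intro m
    rw [hw, (hcomm.zpow_zpow a b).mul_zpow, ← zpow_mul, ← zpow_mul]
  have hwr : w ^ (r : ℤ) = y := by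
    rw [hwpow]
    have h1 : y ^ (a * (r:ℤ)) = y := by
      rw [show a * (r:ℤ) = 1 + 3 * (-b) by linarith, zpow_add, zpow_mul, hy3z, one_zpow,
        mul_one, zpow_one]
    have h2 : z ^ (b * (r:ℤ)) = 1 := by
      rw [mul_comm, zpow_mul, hzrz, one_zpow]
    rw [h1, h2, mul_one]
  have hw3 : w ^ (3 : ℤ) = z := by
    rw [hwpow]
    have h1 : y ^ (a * 3) = 1 := by rw [mul_comm, zpow_mul, hy3z, one_zpow]
    have h2 : z ^ (b * 3) = z := by
      rw [show b * 3 = 1 + (r:ℤ) * (-a) by linarith, zpow_add, zpow_mul, hzrz, one_zpow,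
        mul_one, zpow_one]
    rw [h1, h2, one_mul]
  have hwn : w ^ (3 * r : ℕ) = 1 := by
    have : w ^ ((3 * r : ℕ) : ℤ) = 1 := by
      push_cast
      rw [zpow_mul, hw3, hzrz]
    rwa [zpow_natCast] at this
  have hXw : X * w * X = w⁻¹ := by
    have h1 : X * w * X⁻¹ = (X * y * X⁻¹) ^ a * (X * z * X⁻¹) ^ b := by
      rw [conj_zpow, conj_zpow, hw]; group
    have h2 : X * w * X = X * w * X⁻¹ := by rw [hx1inv]
    rw [h2, h1, hconjy, hconjz, inv_zpow, inv_zpow, hw, mul_inv_rev]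
    exact ((hcomm.zpow_zpow a b).inv_inv).eq

  -- the homomorphism φ to the dihedral group
  set φ : PresentedGroup (F3rels r) →* DihedralGroup (3 * r) :=
    PresentedGroup.toGroup (F3aux.hrels r) with hφdef
  have hφX : φ X = DihedralGroup.sr 0 := by
    rw [hφdef, hX, PresentedGroup.toGroup.of]; rfl
  have hφ1 : φ (PresentedGroup.of (1 : Fin 3)) = DihedralGroup.sr 3 := by
    rw [hφdef, PresentedGroup.toGroup.of]; rfl
  have hφy : φ y = DihedralGroup.r ((r : ℕ) : ZMod (3 * r)) := by
    rw [hφdef, hy, PresentedGroup.toGroup.of]; rfl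
  have hφz : φ z = DihedralGroup.r (3 : ZMod (3 * r)) := by
    rw [hz, map_mul, hφX, hφ1, DihedralGroup.sr_mul_sr, sub_zero]
  have hφw : φ w = DihedralGroup.r 1 := by
    rw [hw, map_mul, map_zpow, map_zpow, hφy, hφz,
      show (DihedralGroup.r ((r : ℕ) : ZMod (3 * r))) = DihedralGroup.r 1 ^ (r : ℕ) from
        (DihedralGroup.r_one_pow r).symm,
      show (DihedralGroup.r (3 : ZMod (3 * r))) = DihedralGroup.r 1 ^ (3 : ℕ) from by
        rw [DihedralGroup.r_one_pow]; norm_num,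
      ← zpow_natCast, ← zpow_natCast, ← zpow_mul, ← zpow_mul, ← zpow_add,
      show (r : ℤ) * a + (3 : ℕ) * b = 1 from by push_cast; linarith, zpow_one]
  -- powers of w indexed by ZMod (3r)
  have hWadd : ∀ u v : ZMod (3 * r), w ^ (u + v).val = w ^ u.val * w ^ v.val := by
    intro u v
    rw [← pow_add, ZMod.val_add]
    exact (pow_eq_pow_mod _ hwn).symm
  have hWint : ∀ m : ℤ, w ^ ((m : ZMod (3 * r))).val = w ^ m := by
    intro m
    have hdvd : ((3 * r : ℕ) : ℤ) ∣ (((m : ZMod (3 * r)).val : ℤ) - m) := by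
      rw [← ZMod.intCast_zmod_eq_zero_iff_dvd]
      push_cast
      rw [ZMod.natCast_zmod_val, sub_self]
    obtain ⟨t, ht⟩ := hdvd
    have hm : m = ((m : ZMod (3 * r)).val : ℤ) - ((3 * r : ℕ) : ℤ) * t := by linarith
    conv_rhs => rw [hm]
    rw [zpow_sub, zpow_mul, zpow_natCast, zpow_natCast, hwn, one_zpow, inv_one, mul_one]
  have hWsub : ∀ u v : ZMod (3 * r), w ^ (u - v).val = w ^ u.val * (w ^ v.val)⁻¹ := by
    intro u v
    have h := hWadd (u - v) v
    rw [sub_add_cancel] at h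
    rw [eq_mul_inv_iff_mul_eq]
    exact h.symm
  have hWX : ∀ k : ℕ, X * w ^ k * X = (w ^ k)⁻¹ := by
    intro k
    have h1 : (X * w * X⁻¹) ^ k = X * w ^ k * X⁻¹ := conj_pow
    rw [hx1inv] at h1
    rw [← h1, hXw, inv_pow]
  have hWXswap : ∀ k : ℕ, w ^ k * X = X * (w ^ k)⁻¹ := by
    intro k
    have h2 : w ^ k * X = X * (X * w ^ k * X) := by
      rw [← mul_assoc, ← mul_assoc, hx1x1, one_mul]
    rw [h2, hWX]
  have hWcomm : ∀ k l : ℕ, w ^ k * (w ^ l)⁻¹ = (w ^ l)⁻¹ * w ^ k := by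
    intro k l
    exact (((Commute.refl w).pow_pow k l).inv_right).eq
  -- the inverse homomorphism ψ
  set ψ : DihedralGroup (3 * r) →* PresentedGroup (F3rels r) := MonoidHom.mk'
    (fun g => match g with
      | .r i => w ^ i.val
      | .sr i => X * w ^ i.val)
    (by
      rintro (i | i) (j | j)
      · exact hWadd i j
      · show X * w ^ (j - i).val = w ^ i.val * (X * w ^ j.val)
        rw [← mul_assoc, hWXswap, hWsub, mul_assoc, hWcomm]
      · show X * w ^ (i + j).val = X * w ^ i.val * w ^ j.val
        rw [hWadd, mul_assoc]
      · show w ^ (j - i).val = X * w ^ i.val * (X * w ^ j.val)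
        rw [mul_assoc, ← mul_assoc (w ^ i.val), hWXswap, ← mul_assoc, ← mul_assoc,
          hx1x1, one_mul, hWsub, hWcomm]) with hψdef

  -- ψ ∘ φ = id
  have hcomp1 : ψ.comp φ = MonoidHom.id (PresentedGroup (F3rels r)) := by
    apply PresentedGroup.ext
    intro x
    fin_cases x
    · show ψ (φ X) = X
      rw [hφX]
      show X * w ^ ((0 : ZMod (3 * r))).val = X
      rw [ZMod.val_zero, pow_zero, mul_one]
    · show ψ (φ (PresentedGroup.of (1 : Fin 3))) = PresentedGroup.of (1 : Fin 3)
      rw [hφ1]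
      show X * w ^ ((3 : ZMod (3 * r))).val = PresentedGroup.of (1 : Fin 3)
      rw [show (3 : ZMod (3 * r)) = ((3 : ℤ) : ZMod (3 * r)) from by push_cast; rfl,
        hWint, hw3, hz, ← mul_assoc, hx1x1, one_mul]
    · show ψ (φ y) = y
      rw [hφy]
      show w ^ (((r : ℕ) : ZMod (3 * r))).val = y
      rw [show ((r : ℕ) : ZMod (3 * r)) = ((r : ℤ) : ZMod (3 * r)) from by push_cast; rfl,
        hWint, hwr]
  -- φ ∘ ψ = id
  have hcomp2 : φ.comp ψ = MonoidHom.id (DihedralGroup (3 * r)) := by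
    apply MonoidHom.ext
    rintro (i | i)
    · show φ (w ^ i.val) = DihedralGroup.r i
      rw [map_pow, hφw, DihedralGroup.r_one_pow, ZMod.natCast_zmod_val]
    · show φ (X * w ^ i.val) = DihedralGroup.sr i
      rw [map_mul, map_pow, hφX, hφw, DihedralGroup.r_one_pow, ZMod.natCast_zmod_val,
        DihedralGroup.sr_mul_r, zero_add]
  set e : PresentedGroup (F3rels r) ≃* DihedralGroup (3 * r) :=
    MonoidHom.toMulEquiv φ ψ hcomp1 hcomp2 with hedef
  have hecoe : ∀ g, e g = φ g := fun g => rfl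
  -- the rotation subgroup of the dihedral group
  set ρ : Multiplicative (ZMod (3 * r)) →* DihedralGroup (3 * r) := MonoidHom.mk'
    (fun u => DihedralGroup.r (Multiplicative.toAdd u)) (fun u v => rfl) with hρdef
  have hρinj : Function.Injective ρ := by
    intro u v h
    have h2 : DihedralGroup.r (Multiplicative.toAdd u) =
        DihedralGroup.r (Multiplicative.toAdd v) := h
    exact Multiplicative.toAdd.injective (DihedralGroup.r.inj h2)
  have hrgen : ∀ m : ℤ, DihedralGroup.r ((m : ZMod (3 * r))) ∈
      Subgroup.closure ({DihedralGroup.r ((r : ℕ) : ZMod (3 * r)),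
        DihedralGroup.r (3 : ZMod (3 * r))} : Set (DihedralGroup (3 * r))) := by
    intro m
    have h1 : DihedralGroup.r ((m : ZMod (3 * r))) =
        (DihedralGroup.r ((r : ℕ) : ZMod (3 * r))) ^ (a * m) *
          (DihedralGroup.r (3 : ZMod (3 * r))) ^ (b * m) := by
      rw [show (DihedralGroup.r ((r : ℕ) : ZMod (3 * r))) = DihedralGroup.r 1 ^ (r : ℕ) from
          (DihedralGroup.r_one_pow r).symm,
        show (DihedralGroup.r (3 : ZMod (3 * r))) = DihedralGroup.r 1 ^ (3 : ℕ) from by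
          rw [DihedralGroup.r_one_pow]; norm_num,
        ← zpow_natCast, ← zpow_natCast, ← zpow_mul, ← zpow_mul, ← zpow_add,
        show (r : ℤ) * (a * m) + (3 : ℕ) * (b * m) = m from by push_cast; linear_combination m * hab,
        F3aux.r_one_zpow]
    rw [h1]
    exact mul_mem (zpow_mem (Subgroup.subset_closure (by simp)) _)
      (zpow_mem (Subgroup.subset_closure (by simp)) _)
  have hclosR : Subgroup.closure ({DihedralGroup.r ((r : ℕ) : ZMod (3 * r)),
      DihedralGroup.r (3 : ZMod (3 * r))} : Set (DihedralGroup (3 * r))) = ρ.range := by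
    apply le_antisymm
    · rw [Subgroup.closure_le]
      rintro x (rfl | rfl)
      · exact ⟨Multiplicative.ofAdd ((r : ℕ) : ZMod (3 * r)), rfl⟩
      · exact ⟨Multiplicative.ofAdd (3 : ZMod (3 * r)), rfl⟩
    · rintro x ⟨u, rfl⟩
      show DihedralGroup.r (Multiplicative.toAdd u) ∈ _
      rw [show (Multiplicative.toAdd u) = (((Multiplicative.toAdd u).val : ℤ) : ZMod (3 * r)) from by
        push_cast [ZMod.natCast_zmod_val]; rfl]
      exact hrgen _
  have hRnormal : (ρ.range).Normal := by
    constructor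
    rintro x ⟨u, rfl⟩ g
    rcases g with j | j
    · exact ⟨u, by
        show DihedralGroup.r (Multiplicative.toAdd u) = _
        show _ = DihedralGroup.r j * DihedralGroup.r (Multiplicative.toAdd u) * (DihedralGroup.r j)⁻¹
        rw [F3aux.inv_r, DihedralGroup.r_mul_r, DihedralGroup.r_mul_r]
        congr 1; ring⟩
    · exact ⟨u⁻¹, by
        show DihedralGroup.r (Multiplicative.toAdd u⁻¹) = _
        show _ = DihedralGroup.sr j * DihedralGroup.r (Multiplicative.toAdd u) * (DihedralGroup.sr j)⁻¹
        rw [F3aux.inv_sr, DihedralGroup.sr_mul_r, DihedralGroup.sr_mul_sr]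
        congr 1
        show -Multiplicative.toAdd u = _
        ring⟩
  have hmapH : (Subgroup.closure ({y, z} : Set (PresentedGroup (F3rels r)))).map
      (e : PresentedGroup (F3rels r) →* DihedralGroup (3 * r)) = ρ.range := by
    rw [MonoidHom.map_closure, Set.image_insert_eq, Set.image_singleton]
    rw [show (e : PresentedGroup (F3rels r) →* DihedralGroup (3 * r)) y =
        DihedralGroup.r ((r : ℕ) : ZMod (3 * r)) from hφy,
      show (e : PresentedGroup (F3rels r) →* DihedralGroup (3 * r)) z =
        DihedralGroup.r (3 : ZMod (3 * r)) from hφz]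
    exact hclosR
  refine ⟨⟨e⟩, ?_, ?_, ?_⟩
  · -- normality
    have hco2 : Subgroup.closure ({y, z} : Set (PresentedGroup (F3rels r))) =
        (ρ.range).comap (e : PresentedGroup (F3rels r) →* DihedralGroup (3 * r)) := by
      rw [← hmapH, Subgroup.comap_map_eq_self_of_injective]
      exact e.injective
    rw [hco2]
    exact hRnormal.comap _
  · exact ⟨((((MulEquiv.subgroupMap e _).trans (MulEquiv.subgroupCongr hmapH)).trans
      (MonoidHom.ofInjective hρinj).symm).trans
      (AddEquiv.toMultiplicative (ZMod.chineseRemainder hcop).toAddEquiv)).trans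
      (MulEquiv.prodMultiplicative (G := ZMod 3) (H := ZMod r))⟩
  · -- trivial center
    rw [eq_bot_iff]
    intro x hx
    rw [Subgroup.mem_bot]
    have hc := Subgroup.mem_center_iff.mp hx
    have hd : ∀ d : DihedralGroup (3 * r), d * e x = e x * d := by
      intro d
      have h2 := congrArg e (hc (e.symm d))
      simpa [map_mul] using h2
    have hodd3r : Odd (3 * r) := Nat.odd_mul.mpr ⟨⟨1, by norm_num⟩, hodd⟩
    have hex1 : e x = 1 := by
      rcases he : e x with i | i
      · have h2 := hd (DihedralGroup.sr 0)
        rw [he, DihedralGroup.sr_mul_r, DihedralGroup.r_mul_sr, zero_add, zero_sub] at h2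
        have h3 : i = -i := DihedralGroup.sr.inj h2
        have h4 : ((2 * i.val : ℕ) : ZMod (3 * r)) = 0 := by
          push_cast [ZMod.natCast_zmod_val]
          linear_combination h3
        have h5 : (3 * r) ∣ 2 * i.val := (ZMod.natCast_eq_zero_iff _ _).mp h4
        have h6 : Nat.Coprime (3 * r) 2 := (Nat.coprime_two_right).mpr hodd3r
        have h7 : (3 * r) ∣ i.val := Nat.Coprime.dvd_of_dvd_mul_left h6 h5
        have h8 : i.val = 0 := Nat.eq_zero_of_dvd_of_lt h7 (ZMod.val_lt i)
        have h9 : i = 0 := by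
          have h10 := ZMod.natCast_zmod_val i
          rw [h8] at h10
          simpa using h10.symm
        rw [h9]
        exact DihedralGroup.one_def.symm
      · exfalso
        have h2 := hd (DihedralGroup.r 1)
        rw [he, DihedralGroup.r_mul_sr, DihedralGroup.sr_mul_r] at h2
        have h3 : i - 1 = i + 1 := DihedralGroup.sr.inj h2
        have h4 : ((2 : ℕ) : ZMod (3 * r)) = 0 := by
          push_cast
          linear_combination -h3
        have h5 : (3 * r) ∣ 2 := (ZMod.natCast_eq_zero_iff _ _).mp h4
        have h6 := Nat.le_of_dvd (by norm_num) h5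
        omega
    apply e.injective
    rw [hex1, map_one]

end main
end
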